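/- Let n ≥ 2 be an integer and P > 0 a real number. The function δ ↦ (e^P − 1) / ∏_{i=1}^{n} (e^{δ_i + δ_{i+1}} − 1) is Lebesgue-integrable over the open simplex {δ ∈ (0,∞)^{n−1} : δ_1 + ⋯ + δ_{n−1} < P}, where one sets δ_n := P − (δ_1 + ⋯ + δ_{n−1}) and δ_{n+1} := δ_1. In particular, the crown volume V(n,P) := 2^{−(n−1)} ∫ over this simplex of (e^P − 1)/∏_{i=1}^{n}(e^{δ_i+δ_{i+1}} − 1) dδ_1⋯dδ_{n−1} is finite. -/

import Mathlib

open MeasureTheory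

open Finset

namespace CrownAux


lemma exp_pair {a b : ℝ} (ha : 0 ≤ a) (hb : 0 ≤ b) :
    (Real.exp a - 1) + (Real.exp b - 1) ≤ Real.exp (a + b) - 1 := by
  rw [Real.exp_add]
  nlinarith [mul_nonneg (sub_nonneg.2 (Real.one_le_exp ha)) (sub_nonneg.2 (Real.one_le_exp hb))]

lemma wAM {x y a : ℝ} (hx : 0 < x) (hy : 0 < y) (ha : 0 ≤ a) (ha1 : a ≤ 1) :
    x ^ a * y ^ (1 - a) ≤ x + y := by
  rcases le_total x y with h | h
  · calc x ^ a * y ^ (1 - a) ≤ y ^ a * y ^ (1 - a) :=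
          mul_le_mul_of_nonneg_right (Real.rpow_le_rpow hx.le h ha) (Real.rpow_nonneg hy.le _)
    _ = y := by rw [← Real.rpow_add hy]; simp
    _ ≤ x + y := le_add_of_nonneg_left hx.le
  · calc x ^ a * y ^ (1 - a) ≤ x ^ a * x ^ (1 - a) :=
          mul_le_mul_of_nonneg_left (Real.rpow_le_rpow hy.le h (by linarith)) (Real.rpow_nonneg hx.le _)
    _ = x := by rw [← Real.rpow_add hx]; simp
    _ ≤ x + y := le_add_of_nonneg_right hy.le

/-- vertex exponents for the path bound -/
noncomputable def bexp (j m : ℕ) : ℝ :=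
  if j = m then 1 - 1 / (m : ℝ) else 1 - (1 / (j : ℝ) - 1 / ((j : ℝ) + 1))

lemma bexp_nonneg {j m : ℕ} (hj : 1 ≤ j) : 0 ≤ bexp j m := by
  unfold bexp
  have hj1 : (1:ℝ) ≤ (j:ℝ) := by exact_mod_cast hj
  split
  · rcases Nat.eq_zero_or_pos m with h | h
    · simp [h]
    · have : (1:ℝ) ≤ (m:ℝ) := by exact_mod_cast h
      have : 1 / (m:ℝ) ≤ 1 := by
        rw [div_le_one (by linarith)]; linarith
      linarith
  · have h1 : 1 / (j:ℝ) ≤ 1 := by rw [div_le_one (by linarith)]; linarith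
    have h2 : 0 ≤ 1 / ((j:ℝ) + 1) := by positivity
    linarith

lemma bexp_lt_one {j m : ℕ} (hj : 1 ≤ j) (hm : 1 ≤ m) : bexp j m < 1 := by
  unfold bexp
  have hj1 : (1:ℝ) ≤ (j:ℝ) := by exact_mod_cast hj
  have hm1 : (1:ℝ) ≤ (m:ℝ) := by exact_mod_cast hm
  split
  · have : 0 < 1 / (m:ℝ) := by positivity
    linarith
  · have : 1 / ((j:ℝ) + 1) < 1 / (j:ℝ) := by
      apply one_div_lt_one_div_of_lt <;> linarith
    linarith

lemma path_bound (x : ℕ → ℝ) (m : ℕ) (hm : 1 ≤ m) : (∀ j ∈ Finset.Icc 1 m, 0 < x j) →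
    ∏ j ∈ Finset.Icc 1 m, x j ^ bexp j m ≤ ∏ i ∈ Finset.Ico 1 m, (x i + x (i + 1)) := by
  induction m, hm using Nat.le_induction with
  | base =>
    intro _
    simp [bexp]
  | succ m hm ih =>
    intro hpos
    have hpos' : ∀ j ∈ Finset.Icc 1 m, 0 < x j := fun j hj => by
      apply hpos; simp only [Finset.mem_Icc] at hj ⊢; omega
    have hxm : 0 < x m := hpos m (by simp; omega)
    have hxm1 : 0 < x (m + 1) := hpos (m + 1) (by simp)
    have key : x m ^ (1 / ((m:ℝ) + 1)) * x (m + 1) ^ (1 - 1 / ((m:ℝ) + 1)) ≤ x m + x (m + 1) := by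
      apply wAM hxm hxm1 (by positivity)
      rw [div_le_one (by positivity)]
      have : (1:ℝ) ≤ (m:ℝ) := by exact_mod_cast hm
      linarith
    have hsplitR : ∏ i ∈ Finset.Ico 1 (m+1), (x i + x (i+1))
        = (∏ i ∈ Finset.Ico 1 m, (x i + x (i+1))) * (x m + x (m+1)) :=
      Finset.prod_Ico_succ_top hm _
    have hsplitL : ∏ j ∈ Finset.Icc 1 (m+1), x j ^ bexp j (m+1)
        = ((∏ j ∈ Finset.Ico 1 m, x j ^ bexp j (m+1)) * x m ^ bexp m (m+1))
            * x (m+1) ^ bexp (m+1) (m+1) := by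
      rw [← Finset.Ico_add_one_right_eq_Icc, Finset.prod_Ico_succ_top (by omega), Finset.prod_Ico_succ_top hm]
    have hsplitL' : ∏ j ∈ Finset.Icc 1 m, x j ^ bexp j m
        = (∏ j ∈ Finset.Ico 1 m, x j ^ bexp j m) * x m ^ bexp m m := by
      rw [← Finset.Ico_add_one_right_eq_Icc, Finset.prod_Ico_succ_top hm]
    rw [hsplitR, hsplitL]
    have hcongr : ∏ j ∈ Finset.Ico 1 m, x j ^ bexp j (m+1)
        = ∏ j ∈ Finset.Ico 1 m, x j ^ bexp j m := by
      apply Finset.prod_congr rfl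
      intro j hj
      simp only [Finset.mem_Ico] at hj
      rw [bexp, bexp, if_neg (by omega), if_neg (by omega)]
    have hbm : bexp m (m+1) = bexp m m + 1/((m:ℝ)+1) := by
      rw [bexp, bexp, if_neg (by omega), if_pos rfl]
      ring
    have hbm1 : bexp (m+1) (m+1) = 1 - 1/((m:ℝ)+1) := by
      rw [bexp, if_pos rfl]; push_cast; ring
    rw [hcongr, hbm, hbm1, Real.rpow_add hxm]
    calc (∏ j ∈ Finset.Ico 1 m, x j ^ bexp j m)
            * (x m ^ bexp m m * x m ^ (1/((m:ℝ)+1))) * x (m+1) ^ (1 - 1/((m:ℝ)+1))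
        = (∏ j ∈ Finset.Icc 1 m, x j ^ bexp j m)
            * (x m ^ (1/((m:ℝ)+1)) * x (m+1) ^ (1 - 1/((m:ℝ)+1))) := by
          rw [hsplitL']; ring
      _ ≤ (∏ i ∈ Finset.Ico 1 m, (x i + x (i+1))) * (x m + x (m+1)) := by
          apply mul_le_mul (ih hpos') key
            (mul_nonneg (Real.rpow_nonneg hxm.le _) (Real.rpow_nonneg hxm1.le _))
            (le_trans (Finset.prod_nonneg fun j hj =>
              Real.rpow_nonneg (hpos' j hj).le _) (ih hpos'))


/-- `t`-th vertex after `k` in cyclic order on `{1, …, n}`. -/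
def vtx (n k t : ℕ) : ℕ := (k + t - 1) % n + 1

/-- inverse of `vtx n k` on `{1, …, n}`. -/
def vtxInv (n k j : ℕ) : ℕ := (j + n - (k + 1)) % n + 1

lemma vtx_mem {n k t : ℕ} (hn : 1 ≤ n) : vtx n k t ∈ Finset.Icc 1 n := by
  have := Nat.mod_lt (k + t - 1) (show 0 < n by omega)
  simp only [vtx, Finset.mem_Icc]
  omega

lemma vtxInv_mem {n k j : ℕ} (hn : 1 ≤ n) : vtxInv n k j ∈ Finset.Icc 1 n := by
  have := Nat.mod_lt (j + n - (k + 1)) (show 0 < n by omega)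
  simp only [vtxInv, Finset.mem_Icc]
  omega

lemma vtx_vtxInv {n k j : ℕ} (hk : k ∈ Finset.Icc 1 n) (hj : j ∈ Finset.Icc 1 n) :
    vtx n k (vtxInv n k j) = j := by
  simp only [Finset.mem_Icc] at hk hj
  have hn : 0 < n := by omega
  unfold vtx vtxInv
  have h1 : k + ((j + n - (k + 1)) % n + 1) - 1 = k + (j + n - (k + 1)) % n := by omega
  rw [h1, Nat.add_mod_mod]
  have h2 : k + (j + n - (k + 1)) = (j - 1) + n := by omega
  rw [h2, Nat.add_mod_right, Nat.mod_eq_of_lt (by omega)]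
  omega

lemma vtxInv_vtx {n k t : ℕ} (hk : k ∈ Finset.Icc 1 n) (ht : t ∈ Finset.Icc 1 n) :
    vtxInv n k (vtx n k t) = t := by
  simp only [Finset.mem_Icc] at hk ht
  have hn : 0 < n := by omega
  unfold vtx vtxInv
  have hr := Nat.mod_lt (k + t - 1) hn
  have h1 : (k + t - 1) % n + 1 + n - (k + 1) = (k + t - 1) % n + (n - k) := by omega
  rw [h1, Nat.mod_add_mod]
  have h2 : k + t - 1 + (n - k) = (t - 1) + n := by omega
  rw [h2, Nat.add_mod_right, Nat.mod_eq_of_lt (by omega)]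
  omega

lemma vtx_last {n k : ℕ} (hk : k ∈ Finset.Icc 1 n) : vtx n k n = k := by
  simp only [Finset.mem_Icc] at hk
  unfold vtx
  have h2 : k + n - 1 = (k - 1) + n := by omega
  rw [h2, Nat.add_mod_right, Nat.mod_eq_of_lt (by omega)]
  omega

lemma vtx_ne {n k t : ℕ} (hk : k ∈ Finset.Icc 1 n) (ht : t ∈ Finset.Icc 1 (n - 1)) :
    vtx n k t ≠ k := by
  simp only [Finset.mem_Icc] at hk ht
  intro h
  have h6 : vtxInv n k (vtx n k t) = t :=
    vtxInv_vtx (by simp only [Finset.mem_Icc]; omega) (by simp only [Finset.mem_Icc]; omega)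
  have h7 : vtxInv n k (vtx n k n) = n :=
    vtxInv_vtx (by simp only [Finset.mem_Icc]; omega) (by simp only [Finset.mem_Icc]; omega)
  rw [vtx_last (by simp only [Finset.mem_Icc]; omega)] at h7
  rw [h] at h6
  omega

lemma vtxInv_lt {n k j : ℕ} (hk : k ∈ Finset.Icc 1 n) (hj : j ∈ Finset.Icc 1 n) (hjk : j ≠ k) :
    vtxInv n k j ∈ Finset.Icc 1 (n - 1) := by
  have h1 := vtxInv_mem (n := n) (k := k) (j := j) (by simp only [Finset.mem_Icc] at hk; omega)
  simp only [Finset.mem_Icc] at h1 ⊢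
  refine ⟨h1.1, ?_⟩
  by_contra h
  have h2 : vtxInv n k j = n := by omega
  have h3 := vtx_vtxInv hk hj
  rw [h2, vtx_last hk] at h3
  exact hjk h3.symm

lemma vtx_step {n : ℕ} (hn : 2 ≤ n) (y : ℕ → ℝ) (hcyc : y (n + 1) = y 1) {k t : ℕ}
    (hk : 1 ≤ k) (ht : 1 ≤ t) : y (vtx n k t + 1) = y (vtx n k (t + 1)) := by
  have hn0 : 0 < n := by omega
  have hr := Nat.mod_lt (k + t - 1) hn0
  have h1 : vtx n k (t + 1) = ((k + t - 1) % n + 1) % n + 1 := by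
    unfold vtx
    congr 1
    rw [Nat.mod_add_mod]
    congr 1
    omega
  rcases Nat.lt_or_ge ((k + t - 1) % n + 1) n with h | h
  · rw [h1, Nat.mod_eq_of_lt h]
    rfl
  · have h2 : (k + t - 1) % n + 1 = n := by omega
    rw [h1, h2, Nat.mod_self]
    show y (vtx n k t + 1) = y 1
    unfold vtx
    rw [h2, hcyc]

lemma cycle_bound {n : ℕ} (hn : 2 ≤ n) (y : ℕ → ℝ)
    (hy : ∀ i ∈ Finset.Icc 1 (n + 1), 0 < y i) (hcyc : y (n + 1) = y 1) {k : ℕ}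
    (hk : k ∈ Finset.Icc 1 n) {c : ℝ} (hc : 0 < c) (hck : c ≤ y k) :
    c ^ 2 * ∏ t ∈ Finset.Icc 1 (n - 1), y (vtx n k t) ^ bexp t (n - 1)
      ≤ ∏ i ∈ Finset.Icc 1 n, (y i + y (i + 1)) := by
  obtain ⟨m, rfl⟩ : ∃ m, n = m + 1 := ⟨n - 1, by omega⟩
  have hm : 1 ≤ m := by omega
  have hk1 : 1 ≤ k := by simp only [Finset.mem_Icc] at hk; omega
  have hmm : m + 1 - 1 = m := by omega
  rw [hmm]
  set x : ℕ → ℝ := fun t => y (vtx (m + 1) k t) with hx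
  have hxpos : ∀ t, 0 < x t := by
    intro t
    apply hy
    have h := vtx_mem (n := m + 1) (k := k) (t := t) (by omega)
    simp only [Finset.mem_Icc] at h ⊢
    omega
  have hreidx : ∏ t ∈ Finset.Icc 1 (m + 1), (x t + x (t + 1))
      = ∏ i ∈ Finset.Icc 1 (m + 1), (y i + y (i + 1)) := by
    refine Finset.prod_nbij' (vtx (m + 1) k) (vtxInv (m + 1) k)
      (fun a _ => vtx_mem (by omega)) (fun a _ => vtxInv_mem (by omega))
      (fun a ha => vtxInv_vtx hk ha) (fun a ha => vtx_vtxInv hk ha) ?_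
    intro a ha
    simp only [Finset.mem_Icc] at ha
    have := vtx_step (by omega : 2 ≤ m + 1) y hcyc hk1 ha.1
    simp only [hx, this]
  rw [← hreidx]
  -- split off the two factors at the special vertex
  have hsplit : ∏ t ∈ Finset.Icc 1 (m + 1), (x t + x (t + 1))
      = ((∏ t ∈ Finset.Ico 1 m, (x t + x (t + 1))) * (x m + x (m + 1)))
          * (x (m + 1) + x (m + 2)) := by
    rw [← Finset.Ico_add_one_right_eq_Icc, Finset.prod_Ico_succ_top (by omega), Finset.prod_Ico_succ_top hm]
  rw [hsplit]
  have hxk : x (m + 1) = y k := by rw [hx]; simp only; rw [vtx_last hk]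
  have hpath : ∏ t ∈ Finset.Icc 1 m, x t ^ bexp t m ≤ ∏ t ∈ Finset.Ico 1 m, (x t + x (t + 1)) :=
    path_bound x m hm (fun j _ => hxpos j)
  have hQ : 0 ≤ ∏ t ∈ Finset.Icc 1 m, x t ^ bexp t m :=
    Finset.prod_nonneg fun j _ => Real.rpow_nonneg (hxpos j).le _
  have hB : c ≤ x m + x (m + 1) := by
    have := hxpos m
    rw [hxk]
    linarith
  have hC : c ≤ x (m + 1) + x (m + 2) := by
    have := hxpos (m + 2)
    rw [hxk]
    linarith
  have hRnn : 0 ≤ ∏ t ∈ Finset.Ico 1 m, (x t + x (t + 1)) :=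
    Finset.prod_nonneg fun j _ => by have := hxpos j; have := hxpos (j + 1); linarith
  calc c ^ 2 * ∏ t ∈ Finset.Icc 1 m, x t ^ bexp t m
      = ((∏ t ∈ Finset.Icc 1 m, x t ^ bexp t m) * c) * c := by ring
    _ ≤ ((∏ t ∈ Finset.Ico 1 m, (x t + x (t + 1))) * (x m + x (m + 1)))
          * (x (m + 1) + x (m + 2)) := by
        apply mul_le_mul (mul_le_mul hpath hB hc.le hRnn) hC hc.le
        exact mul_nonneg hRnn (by linarith)


lemma prod_Icc_fin {M : Type*} [CommMonoid M] (m : ℕ) (F : ℕ → M) :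
    ∏ t ∈ Finset.Icc 1 m, F t = ∏ i : Fin m, F ((i : ℕ) + 1) := by
  rw [← Finset.Ico_add_one_right_eq_Icc, Finset.prod_Ico_eq_prod_range,
    Fin.prod_univ_eq_prod_range (fun i => F (i + 1)) m]
  exact Finset.prod_congr (by norm_num) fun i _ => by rw [add_comm]

lemma sum_Icc_fin (m : ℕ) (F : ℕ → ℝ) :
    ∑ t ∈ Finset.Icc 1 m, F t = ∑ i : Fin m, F ((i : ℕ) + 1) := by
  rw [← Finset.Ico_add_one_right_eq_Icc, Finset.sum_Ico_eq_sum_range,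
    Fin.sum_univ_eq_sum_range (fun i => F (i + 1)) m]
  exact Finset.sum_congr (by norm_num) fun i _ => by rw [add_comm]

lemma sum_Icc_split (m : ℕ) (hm : 1 ≤ m) (F : ℕ → ℝ) :
    ∑ t ∈ Finset.Icc 1 m, F t = (∑ t ∈ Finset.Icc 1 (m - 1), F t) + F m := by
  obtain ⟨m', rfl⟩ : ∃ m', m = m' + 1 := ⟨m - 1, by omega⟩
  rw [← Finset.Ico_add_one_right_eq_Icc, Finset.sum_Ico_succ_top (by omega), Finset.Ico_add_one_right_eq_Icc]
  simp

end CrownAux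


/-- Cyclic extension of the simplex coordinates: for `1 ≤ i ≤ n-1` this is `δ_i`
(the `(i-1)`-th component of `δ`), `δ_n := P - (δ_1 + ⋯ + δ_{n-1})`, and
`δ_{n+1} := δ_1`. -/
noncomputable def crownδ (n : ℕ) (P : ℝ) (δ : Fin (n - 1) → ℝ) (i : ℕ) : ℝ :=
  if h : n - 1 = 0 then 0
  else if i = n then P - ∑ j, δ j
  else if i = n + 1 then δ ⟨0, Nat.pos_of_ne_zero h⟩
  else δ ⟨(i - 1) % (n - 1), Nat.mod_lt _ (Nat.pos_of_ne_zero h)⟩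

namespace CrownAux


variable {n : ℕ} {P : ℝ}

lemma crown_coord (hn : 2 ≤ n) (δ : Fin (n - 1) → ℝ) {t : ℕ} (ht1 : 1 ≤ t) (ht2 : t ≤ n - 1) :
    crownδ n P δ t = δ ⟨t - 1, by omega⟩ := by
  rw [crownδ, dif_neg (by omega : ¬ (n - 1 = 0)), if_neg (by omega), if_neg (by omega)]
  exact congrArg δ (Fin.ext (Nat.mod_eq_of_lt (by omega)))

lemma crown_top (hn : 2 ≤ n) (δ : Fin (n - 1) → ℝ) :
    crownδ n P δ n = P - ∑ j, δ j := by
  rw [crownδ, dif_neg (by omega : ¬ (n - 1 = 0)), if_pos rfl]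

lemma crown_cyc (hn : 2 ≤ n) (δ : Fin (n - 1) → ℝ) :
    crownδ n P δ (n + 1) = crownδ n P δ 1 := by
  rw [crownδ, crownδ, dif_neg (by omega : ¬ (n - 1 = 0)),
    dif_neg (by omega : ¬ (n - 1 = 0)), if_neg (by omega), if_pos rfl,
    if_neg (by omega), if_neg (by omega)]
  exact congrArg δ (Fin.ext (by simp))

lemma crown_sum (hn : 2 ≤ n) (δ : Fin (n - 1) → ℝ) :
    ∑ t ∈ Finset.Icc 1 n, crownδ n P δ t = P := by
  rw [sum_Icc_split n (by omega), crown_top hn δ]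
  have h1 : ∑ t ∈ Finset.Icc 1 (n - 1), crownδ n P δ t = ∑ i, δ i := by
    rw [sum_Icc_fin]
    apply Finset.sum_congr rfl
    intro i _
    rw [crown_coord hn δ (by omega) (by omega : (i : ℕ) + 1 ≤ n - 1)]
    exact congrArg δ (Fin.ext (by simp))
  rw [h1]
  ring

lemma crown_pos (hn : 2 ≤ n) {δ : Fin (n - 1) → ℝ} (hδ : ∀ i, 0 < δ i)
    (hsum : ∑ i, δ i < P) {t : ℕ} (ht : t ∈ Finset.Icc 1 (n + 1)) :
    0 < crownδ n P δ t := by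
  simp only [Finset.mem_Icc] at ht
  rcases Nat.lt_or_ge t n with h | h
  · rw [crown_coord hn δ ht.1 (by omega)]
    exact hδ _
  · rcases Nat.eq_or_lt_of_le h with h2 | h2
    · rw [← h2, crown_top hn δ]
      linarith
    · have h3 : t = n + 1 := by omega
      rw [h3, crown_cyc hn δ, crown_coord hn δ le_rfl (by omega)]
      exact hδ _

lemma crown_lt (hn : 2 ≤ n) {δ : Fin (n - 1) → ℝ} (hδ : ∀ i, 0 < δ i)
    (hsum : ∑ i, δ i < P) {t : ℕ} (ht : t ∈ Finset.Icc 1 n) :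
    crownδ n P δ t < P := by
  simp only [Finset.mem_Icc] at ht
  have hne : Nonempty (Fin (n - 1)) := ⟨⟨0, by omega⟩⟩
  rcases Nat.lt_or_ge t n with h | h
  · rw [crown_coord hn δ ht.1 (by omega)]
    calc δ ⟨t - 1, by omega⟩ ≤ ∑ i, δ i :=
          Finset.single_le_sum (fun i _ => (hδ i).le) (Finset.mem_univ _)
      _ < P := hsum
  · have h2 : t = n := by omega
    rw [h2, crown_top hn δ]
    have : 0 < ∑ i, δ i := Finset.sum_pos (fun i _ => hδ i) Finset.univ_nonempty
    linarith

lemma crown_measurable (t : ℕ) : Measurable fun δ : Fin (n - 1) → ℝ => crownδ n P δ t := by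
  by_cases h : n - 1 = 0
  · simp only [crownδ, dif_pos h]
    exact measurable_const
  · by_cases h2 : t = n
    · simp only [crownδ, dif_neg h, if_pos h2]
      exact measurable_const.sub (Finset.univ.measurable_sum fun i _ => measurable_pi_apply i)
    · by_cases h3 : t = n + 1
      · simp only [crownδ, dif_neg h, if_neg h2, if_pos h3]
        exact measurable_pi_apply _
      · simp only [crownδ, dif_neg h, if_neg h2, if_neg h3]
        exact measurable_pi_apply _


/-- one-dimensional profile functions -/
noncomputable def hfun (P β : ℝ) : ℝ → ℝ :=
  (Set.Ioo (0:ℝ) P).indicator fun x => (Real.exp x - 1) ^ (-β)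

lemma hfun_of_mem {P β x : ℝ} (hx : x ∈ Set.Ioo (0:ℝ) P) :
    hfun P β x = (Real.exp x - 1) ^ (-β) := Set.indicator_of_mem hx _

lemma hfun_integrable {P : ℝ} (hP : 0 < P) {β : ℝ} (hβ0 : 0 ≤ β) (hβ1 : β < 1) :
    Integrable (hfun P β) := by
  rw [hfun, integrable_indicator_iff measurableSet_Ioo]
  have hmaj : IntegrableOn (fun x : ℝ => x ^ (-β)) (Set.Ioo 0 P) :=
    (intervalIntegral.integrableOn_Ioo_rpow_iff hP).2 (by linarith)
  apply Integrable.mono' hmaj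
  · apply ContinuousOn.aestronglyMeasurable ?_ measurableSet_Ioo
    apply ContinuousOn.rpow_const (Real.continuous_exp.continuousOn.sub continuousOn_const)
    intro x hx
    left
    have h1 := Real.add_one_le_exp x
    have h2 : (0:ℝ) < x := hx.1
    intro h
    simp only [Pi.sub_apply, sub_eq_zero] at h
    nlinarith
  · refine (ae_restrict_iff' measurableSet_Ioo).2 (ae_of_all _ fun x hx => ?_)
    have h1 := Real.add_one_le_exp x
    have hx0 : (0:ℝ) < x := hx.1
    rw [Real.norm_eq_abs, abs_of_nonneg (Real.rpow_nonneg (by nlinarith) _)]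
    exact Real.rpow_le_rpow_of_nonpos hx0 (by nlinarith) (neg_nonpos.2 hβ0)

/-- reflection of one coordinate through the simplex constraint -/
noncomputable def reflMap (P : ℝ) {m : ℕ} (a : Fin m) (δ : Fin m → ℝ) : Fin m → ℝ :=
  Function.update δ a (P - ∑ i, δ i)

lemma reflMap_apply_ne {P : ℝ} {m : ℕ} {a j : Fin m} (δ : Fin m → ℝ) (h : j ≠ a) :
    reflMap P a δ j = δ j := Function.update_of_ne h _ _

lemma sum_reflMap (P : ℝ) {m : ℕ} (a : Fin m) (δ : Fin m → ℝ) :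
    ∑ i, reflMap P a δ i = P - δ a := by
  rw [reflMap, Finset.sum_update_of_mem (Finset.mem_univ a), Finset.sdiff_singleton_eq_erase]
  have h1 : ∑ i ∈ Finset.univ.erase a, δ i + δ a = ∑ i, δ i :=
    Finset.sum_erase_add _ _ (Finset.mem_univ a)
  linarith

lemma reflMap_invol (P : ℝ) {m : ℕ} (a : Fin m) (δ : Fin m → ℝ) :
    reflMap P a (reflMap P a δ) = δ := by
  have h1 := sum_reflMap P a δ
  rw [reflMap, h1, show P - (P - δ a) = δ a by ring, reflMap, Function.update_idem,
    Function.update_eq_self]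

lemma reflMap_continuous {P : ℝ} {m : ℕ} {a : Fin m} : Continuous (reflMap P a) := by
  apply continuous_pi
  intro j
  simp only [reflMap, Function.update_apply]
  by_cases h : j = a
  · simp only [if_pos h]
    exact continuous_const.sub (continuous_finset_sum _ fun i _ => continuous_apply i)
  · simp only [if_neg h]
    exact continuous_apply j

noncomputable def reflHomeo (P : ℝ) {m : ℕ} (a : Fin m) :
    Homeomorph (Fin m → ℝ) (Fin m → ℝ) where
  toFun := reflMap P a
  invFun := reflMap P a
  left_inv := reflMap_invol P a
  right_inv := reflMap_invol P a
  continuous_toFun := reflMap_continuous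
  continuous_invFun := reflMap_continuous

lemma reflMap_measurePreserving {m : ℕ} (P : ℝ) (a : Fin (m + 1)) :
    MeasurePreserving (reflMap P a) volume volume := by
  have he := volume_preserving_piFinSuccAbove (fun _ : Fin (m + 1) => ℝ) a
  set e := MeasurableEquiv.piFinSuccAbove (fun _ : Fin (m + 1) => ℝ) a with hedef
  have hT' : MeasurePreserving
      (fun p : (Fin m → ℝ) × ℝ => (p.1, P - ∑ i, p.1 i - p.2))
      ((volume : Measure (Fin m → ℝ)).prod volume)
      ((volume : Measure (Fin m → ℝ)).prod volume) := by
    have hgm : Measurable (Function.uncurry fun (z : Fin m → ℝ) (s : ℝ) => P - ∑ i, z i - s) :=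
      (measurable_const.sub
        ((Finset.univ.measurable_sum fun i _ => measurable_pi_apply i).comp measurable_fst)).sub
        measurable_snd
    have hae : ∀ᵐ z : Fin m → ℝ ∂(volume : Measure (Fin m → ℝ)),
        Measure.map (fun s : ℝ => P - ∑ i, z i - s) volume = volume := by
      apply Filter.Eventually.of_forall
      intro z
      have h1 : MeasurePreserving (fun s : ℝ => (P - ∑ i, z i) + -s) volume volume :=
        (measurePreserving_add_left volume _).comp (Measure.measurePreserving_neg _)
      have h2 : (fun s : ℝ => (P - ∑ i, z i) + -s) = fun s : ℝ => P - ∑ i, z i - s := by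
        funext s
        ring
      rw [← h2]
      exact h1.map_eq
    exact (MeasurePreserving.id volume).skew_product hgm hae
  have hT : MeasurePreserving
      (fun p : ℝ × (Fin m → ℝ) => (P - ∑ i, p.2 i - p.1, p.2))
      ((volume : Measure ℝ).prod volume) ((volume : Measure ℝ).prod volume) := by
    have := (Measure.measurePreserving_swap.comp hT').comp Measure.measurePreserving_swap
    exact this
  have hkey : reflMap P a = e.symm ∘ (fun p : ℝ × (Fin m → ℝ) => (P - ∑ i, p.2 i - p.1, p.2)) ∘ e := by
    funext δ
    have h1 : e δ = (δ a, a.removeNth δ) := rfl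
    have h2 : ∑ i, a.removeNth δ i = (∑ i, δ i) - δ a := by
      have := Fin.sum_univ_succAbove δ a
      simp only [Fin.removeNth]
      linarith
    simp only [Function.comp_apply, h1, h2]
    have h3 : P - ((∑ i, δ i) - δ a) - δ a = P - ∑ i, δ i := by ring
    rw [h3]
    have h4 : e.symm (P - ∑ i, δ i, a.removeNth δ) = a.insertNth (P - ∑ i, δ i) (a.removeNth δ) :=
      rfl
    rw [h4, Fin.insertNth_removeNth]
    rfl
  rw [hkey]
  exact (he.symm e).comp (hT.comp he)

lemma integrable_of_comp_reflMap {M : ℕ} (hM : M ≠ 0) {P : ℝ} (a : Fin M)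
    {g : (Fin M → ℝ) → ℝ} (hg : Integrable (fun δ => g (reflMap P a δ))) : Integrable g := by
  obtain ⟨m, rfl⟩ : ∃ m, M = m + 1 := ⟨M - 1, by omega⟩
  exact ((reflMap_measurePreserving P a).integrable_comp_emb
    (reflHomeo P a).toMeasurableEquiv.measurableEmbedding).1 hg

lemma refl_prod_integrable {M : ℕ} (hM : M ≠ 0) {P : ℝ} (hP : 0 < P) (E : Fin M → ℝ)
    (hE0 : ∀ i, 0 ≤ E i) (hE1 : ∀ i, E i < 1) (a : Fin M) :
    Integrable (fun δ : Fin M → ℝ =>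
      ∏ i, hfun P (E i) (if i = a then P - ∑ j, δ j else δ i)) := by
  apply integrable_of_comp_reflMap hM a
  have hkey : (fun δ : Fin M → ℝ =>
      ∏ i, hfun P (E i) (if i = a then P - ∑ j, reflMap P a δ j else reflMap P a δ i))
      = fun δ : Fin M → ℝ => ∏ i, hfun P (E i) (δ i) := by
    funext δ
    apply Finset.prod_congr rfl
    intro i _
    congr 1
    by_cases h : i = a
    · subst h
      rw [if_pos rfl, sum_reflMap]
      ring
    · rw [if_neg h, reflMap_apply_ne δ h]
  rw [hkey]
  exact Integrable.fintype_prod fun i => hfun_integrable hP (hE0 i) (hE1 i)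

lemma plain_prod_integrable {M : ℕ} {P : ℝ} (hP : 0 < P) (E : Fin M → ℝ)
    (hE0 : ∀ i, 0 ≤ E i) (hE1 : ∀ i, E i < 1) :
    Integrable (fun δ : Fin M → ℝ => ∏ i, hfun P (E i) (δ i)) :=
  Integrable.fintype_prod fun i => hfun_integrable hP (hE0 i) (hE1 i)


lemma vtx_self {n t : ℕ} (ht : t ∈ Finset.Icc 1 n) : vtx n n t = t := by
  simp only [Finset.mem_Icc] at ht
  unfold vtx
  rw [show n + t - 1 = n + (t - 1) by omega, Nat.add_mod_left, Nat.mod_eq_of_lt (by omega)]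
  omega

/-- dominating function on the region where the `k`-th cyclic coordinate is at least `P/n` -/
noncomputable def gdom (n : ℕ) (P : ℝ) (k : ℕ) (δ : Fin (n - 1) → ℝ) : ℝ :=
  (Real.exp P - 1) / (Real.exp (P / n) - 1) ^ 2 *
    ∏ t ∈ Finset.Icc 1 (n - 1), hfun P (bexp t (n - 1)) (crownδ n P δ (vtx n k t))

lemma gdom_integrable {n : ℕ} (hn : 2 ≤ n) {P : ℝ} (hP : 0 < P) {k : ℕ}
    (hk : k ∈ Finset.Icc 1 n) : Integrable (gdom n P k) := by
  have hm : 1 ≤ n - 1 := by omega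
  unfold gdom
  apply Integrable.const_mul
  by_cases hkn : k = n
  · subst hkn
    have hkey : (fun δ : Fin (k - 1) → ℝ => ∏ t ∈ Finset.Icc 1 (k - 1),
          hfun P (bexp t (k - 1)) (crownδ k P δ (vtx k k t)))
        = fun δ => ∏ i : Fin (k - 1), hfun P (bexp ((i : ℕ) + 1) (k - 1)) (δ i) := by
      funext δ
      rw [prod_Icc_fin]
      apply Finset.prod_congr rfl
      intro i _
      have hi := i.2
      have h1 : vtx k k ((i : ℕ) + 1) = (i : ℕ) + 1 :=
        vtx_self (by simp only [Finset.mem_Icc]; omega)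
      have h2 : (⟨(i : ℕ) + 1 - 1, by omega⟩ : Fin (k - 1)) = i := Fin.ext (by simp)
      rw [h1, crown_coord hn δ (by omega) (by omega), h2]
    rw [hkey]
    exact plain_prod_integrable hP _ (fun i => bexp_nonneg (by omega))
      (fun i => bexp_lt_one (by omega) hm)
  · have hk1 : 1 ≤ k := by simp only [Finset.mem_Icc] at hk; omega
    have hkk : k ≤ n - 1 := by simp only [Finset.mem_Icc] at hk; omega
    set M := n - 1 with hM
    set a : Fin M := ⟨k - 1, by omega⟩ with ha
    set E : Fin M → ℝ := fun i => bexp (vtxInv n k (if i = a then n else (i : ℕ) + 1)) M with hE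
    have hjmem : ∀ i : Fin M, (if i = a then n else (i : ℕ) + 1) ∈ Finset.Icc 1 n := by
      intro i
      by_cases h : i = a
      · simp only [if_pos h, Finset.mem_Icc]; omega
      · have := i.2
        simp only [if_neg h, Finset.mem_Icc]; omega
    have hjne : ∀ i : Fin M, (if i = a then n else (i : ℕ) + 1) ≠ k := by
      intro i
      by_cases h : i = a
      · simp only [if_pos h]; omega
      · simp only [if_neg h]
        intro hc
        apply h
        apply Fin.ext
        simp only [ha]
        omega
    have hkey : (fun δ : Fin M → ℝ => ∏ t ∈ Finset.Icc 1 M,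
          hfun P (bexp t M) (crownδ n P δ (vtx n k t)))
        = fun δ => ∏ i : Fin M, hfun P (E i) (if i = a then P - ∑ j, δ j else δ i) := by
      funext δ
      refine Finset.prod_nbij'
        (fun t => if vtx n k t = n then a else ⟨(vtx n k t - 1) % M, Nat.mod_lt _ (by omega)⟩)
        (fun i => vtxInv n k (if i = a then n else (i : ℕ) + 1))
        (fun t _ => Finset.mem_univ _) (fun i _ => ?memj) ?linv ?rinv ?hfg
      case memj =>
        have h1 := vtxInv_lt (n := n) (k := k) hk (hjmem i) (hjne i)
        rwa [← hM] at h1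
      case linv =>
        intro t ht
        have htn : t ∈ Finset.Icc 1 n := by
          simp only [Finset.mem_Icc] at ht ⊢; omega
        have hv := vtx_mem (n := n) (k := k) (t := t) (by omega)
        have hvne := vtx_ne (n := n) hk ht
        have hinv := vtxInv_vtx hk htn
        simp only [Finset.mem_Icc] at hv
        by_cases h : vtx n k t = n
        · rw [if_pos h, if_pos (rfl : (a : Fin M) = a)]
          exact (congrArg (vtxInv n k) h).symm.trans hinv
        · rw [if_neg h]
          have hne : (⟨(vtx n k t - 1) % M, Nat.mod_lt _ (by omega)⟩ : Fin M) ≠ a := by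
            intro hc
            apply hvne
            have := congrArg Fin.val hc
            simp only [ha] at this
            rw [Nat.mod_eq_of_lt (by omega)] at this
            omega
          rw [if_neg hne]
          show vtxInv n k ((vtx n k t - 1) % M + 1) = t
          rw [Nat.mod_eq_of_lt (by omega),
            show vtx n k t - 1 + 1 = vtx n k t by omega, hinv]
      case rinv =>
        intro i _
        have hj := hjmem i
        have hjn := hjne i
        have h1 := vtx_vtxInv hk hj
        by_cases h : i = a
        · simp only [if_pos h] at h1 ⊢
          rw [if_pos h1]
          exact h.symm
        · simp only [if_neg h] at h1 ⊢
          have := i.2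
          have hvn : vtx n k (vtxInv n k ((i : ℕ) + 1)) ≠ n := by rw [h1]; omega
          rw [if_neg hvn]
          apply Fin.ext
          show (vtx n k (vtxInv n k ((i : ℕ) + 1)) - 1) % M = (i : ℕ)
          rw [h1, Nat.mod_eq_of_lt (by omega)]
          omega
      case hfg =>
        intro t ht
        have htn : t ∈ Finset.Icc 1 n := by
          simp only [Finset.mem_Icc] at ht ⊢; omega
        have hv := vtx_mem (n := n) (k := k) (t := t) (by omega)
        have hvne := vtx_ne (n := n) hk ht
        have hinv := vtxInv_vtx hk htn
        simp only [Finset.mem_Icc] at hv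
        by_cases h : vtx n k t = n
        · rw [if_pos h]
          have e1 : E a = bexp t M := by
            show bexp (vtxInv n k (if a = a then n else (a : ℕ) + 1)) M = bexp t M
            rw [if_pos (rfl : (a : Fin M) = a), (congrArg (vtxInv n k) h).symm.trans hinv]
          rw [if_pos (rfl : (a : Fin M) = a), e1, h, crown_top hn δ]
        · rw [if_neg h]
          have hne : (⟨(vtx n k t - 1) % M, Nat.mod_lt _ (by omega)⟩ : Fin M) ≠ a := by
            intro hc
            apply hvne
            have := congrArg Fin.val hc
            simp only [ha] at this
            rw [Nat.mod_eq_of_lt (by omega)] at this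
            omega
          have hwv : ((⟨(vtx n k t - 1) % M, Nat.mod_lt _ (by omega)⟩ : Fin M) : ℕ)
              = vtx n k t - 1 := Nat.mod_eq_of_lt (by omega)
          have e1 : E ⟨(vtx n k t - 1) % M, Nat.mod_lt _ (by omega)⟩ = bexp t M := by
            show bexp (vtxInv n k (if (⟨(vtx n k t - 1) % M, Nat.mod_lt _ (by omega)⟩ : Fin M) = a
              then n else (vtx n k t - 1) % M + 1)) M = bexp t M
            rw [if_neg hne, Nat.mod_eq_of_lt (by omega),
              show vtx n k t - 1 + 1 = vtx n k t by omega, hinv]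
          rw [if_neg hne, e1, crown_coord hn δ (by omega) (by omega)]
          exact congrArg (hfun P (bexp t M)) (congrArg δ (Fin.ext (show vtx n k t - 1
            = (vtx n k t - 1) % M from (Nat.mod_eq_of_lt (by omega)).symm)))
    rw [hkey]
    refine refl_prod_integrable (by omega) hP E (fun i => ?_) (fun i => ?_) a
    · exact bexp_nonneg (by
        have := vtxInv_lt (n := n) (k := k) hk (hjmem i) (hjne i)
        simp only [Finset.mem_Icc] at this
        omega)
    · refine bexp_lt_one (by
        have := vtxInv_lt (n := n) (k := k) hk (hjmem i) (hjne i)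
        simp only [Finset.mem_Icc] at this
        omega) hm


lemma gdom_bound {n : ℕ} (hn : 2 ≤ n) {P : ℝ} (hP : 0 < P) {k : ℕ}
    (hk : k ∈ Finset.Icc 1 n) {δ : Fin (n - 1) → ℝ} (hδ : ∀ i, 0 < δ i)
    (hsum : ∑ i, δ i < P) (hak : P / n ≤ crownδ n P δ k) :
    ‖(Real.exp P - 1) /
        ∏ i ∈ Finset.Icc 1 n, (Real.exp (crownδ n P δ i + crownδ n P δ (i + 1)) - 1)‖
      ≤ gdom n P k δ := by
  have hm : 1 ≤ n - 1 := by omega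
  set d := crownδ n P δ with hd
  set y : ℕ → ℝ := fun i => Real.exp (d i) - 1 with hy
  have hdpos : ∀ i ∈ Finset.Icc 1 (n + 1), 0 < d i := fun i hi => crown_pos hn hδ hsum hi
  have hypos : ∀ i ∈ Finset.Icc 1 (n + 1), 0 < y i := by
    intro i hi
    have h1 := Real.add_one_le_exp (d i)
    have h2 := hdpos i hi
    simp only [hy]
    nlinarith
  have hcyc : y (n + 1) = y 1 := by simp only [hy, hd]; rw [crown_cyc hn]
  set c := Real.exp (P / n) - 1 with hc
  have hc0 : 0 < c := by
    have h1 := Real.add_one_le_exp (P / n)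
    have h2 : 0 < P / n := by positivity
    simp only [hc]
    nlinarith
  have hck : c ≤ y k := by
    simp only [hy, hc]
    have := Real.exp_le_exp.2 hak
    linarith
  set Q := ∏ t ∈ Finset.Icc 1 (n - 1), y (vtx n k t) ^ bexp t (n - 1) with hQ
  have hQpos : 0 < Q := by
    apply Finset.prod_pos
    intro t ht
    apply Real.rpow_pos_of_pos
    apply hypos
    have := vtx_mem (n := n) (k := k) (t := t) (by omega)
    simp only [Finset.mem_Icc] at this ⊢
    omega
  have hcb := cycle_bound hn y hypos hcyc hk hc0 hck
  rw [← hQ] at hcb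
  have hDge : ∏ i ∈ Finset.Icc 1 n, (y i + y (i + 1))
      ≤ ∏ i ∈ Finset.Icc 1 n, (Real.exp (d i + d (i + 1)) - 1) := by
    apply Finset.prod_le_prod
    · intro i hi
      simp only [Finset.mem_Icc] at hi
      have h1 := hypos i (by simp only [Finset.mem_Icc]; omega)
      have h2 := hypos (i + 1) (by simp only [Finset.mem_Icc]; omega)
      linarith
    · intro i hi
      simp only [Finset.mem_Icc] at hi
      exact exp_pair (hdpos i (by simp only [Finset.mem_Icc]; omega)).le
        (hdpos (i + 1) (by simp only [Finset.mem_Icc]; omega)).le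
  have hD0 : 0 < ∏ i ∈ Finset.Icc 1 n, (Real.exp (d i + d (i + 1)) - 1) :=
    lt_of_lt_of_le (lt_of_lt_of_le (mul_pos (pow_pos hc0 2) hQpos) hcb) hDge
  have hN : 0 < Real.exp P - 1 := by
    have := Real.add_one_le_exp P
    nlinarith
  rw [Real.norm_eq_abs, abs_of_nonneg (div_nonneg hN.le hD0.le)]
  have hprod : ∏ t ∈ Finset.Icc 1 (n - 1), hfun P (bexp t (n - 1)) (d (vtx n k t)) = Q⁻¹ := by
    rw [hQ, ← Finset.prod_inv_distrib]
    apply Finset.prod_congr rfl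
    intro t ht
    have hvm := vtx_mem (n := n) (k := k) (t := t) (by omega)
    have hvm' : vtx n k t ∈ Finset.Icc 1 (n + 1) := by
      simp only [Finset.mem_Icc] at hvm ⊢
      omega
    have h1 : d (vtx n k t) ∈ Set.Ioo 0 P := ⟨hdpos _ hvm', crown_lt hn hδ hsum hvm⟩
    rw [hfun_of_mem h1, Real.rpow_neg (by
      have h3 := hdpos _ hvm'
      have h4 := Real.add_one_le_exp (d (vtx n k t))
      nlinarith : (0:ℝ) ≤ Real.exp (d (vtx n k t)) - 1)]
  calc (Real.exp P - 1) / ∏ i ∈ Finset.Icc 1 n, (Real.exp (d i + d (i + 1)) - 1)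
      ≤ (Real.exp P - 1) / (c ^ 2 * Q) :=
        div_le_div_of_nonneg_left hN.le (mul_pos (pow_pos hc0 2) hQpos) (le_trans hcb hDge)
    _ = (Real.exp P - 1) / c ^ 2 * Q⁻¹ := by
        rw [← div_div, div_eq_mul_inv]
    _ = gdom n P k δ := by
        unfold gdom
        rw [← hd, ← hc, hprod]

end CrownAux

open CrownAux

/-- The integrand of the crown volume `V(n,P)` is Lebesgue-integrable over the
open simplex `{δ ∈ (0,∞)^{n-1} : δ_1 + ⋯ + δ_{n-1} < P}`; in particular the
crown volume is finite. -/
theorem stmt_2 (n : ℕ) (hn : 2 ≤ n) (P : ℝ) (hP : 0 < P) :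
    IntegrableOn
      (fun δ : Fin (n - 1) → ℝ =>
        (Real.exp P - 1) /
          ∏ i ∈ Finset.Icc 1 n,
            (Real.exp (crownδ n P δ i + crownδ n P δ (i + 1)) - 1))
      {δ : Fin (n - 1) → ℝ | (∀ i, 0 < δ i) ∧ ∑ i, δ i < P} := by
  have hm : 1 ≤ n - 1 := by omega
  set S := {δ : Fin (n - 1) → ℝ | (∀ i, 0 < δ i) ∧ ∑ i, δ i < P} with hS
  have hSmeas : MeasurableSet S := by
    rw [hS, Set.setOf_and]
    apply MeasurableSet.inter
    · rw [Set.setOf_forall]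
      exact MeasurableSet.iInter fun i =>
        measurableSet_lt measurable_const (measurable_pi_apply i)
    · exact measurableSet_lt (Finset.univ.measurable_sum fun i _ => measurable_pi_apply i)
        measurable_const
  have hAmeas : ∀ k : ℕ, MeasurableSet {δ : Fin (n - 1) → ℝ | P / n ≤ crownδ n P δ k} :=
    fun k => measurableSet_le measurable_const (crown_measurable k)
  have hfmeas : Measurable (fun δ : Fin (n - 1) → ℝ => (Real.exp P - 1) /
      ∏ i ∈ Finset.Icc 1 n, (Real.exp (crownδ n P δ i + crownδ n P δ (i + 1)) - 1)) :=
    measurable_const.div (Finset.measurable_prod _ fun i _ =>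
      (Real.measurable_exp.comp ((crown_measurable i).add (crown_measurable (i + 1)))).sub
        measurable_const)
  have hcover : S = ⋃ k ∈ Finset.Icc 1 n, (S ∩ {δ | P / n ≤ crownδ n P δ k}) := by
    ext δ
    simp only [Set.mem_iUnion, Set.mem_inter_iff, exists_prop]
    constructor
    · intro hδ
      have hex : ∃ k ∈ Finset.Icc 1 n, P / n ≤ crownδ n P δ k := by
        by_contra hcon
        push_neg at hcon
        have hlt : ∑ t ∈ Finset.Icc 1 n, crownδ n P δ t
            < ∑ t ∈ Finset.Icc 1 n, P / n :=
          Finset.sum_lt_sum_of_nonempty (Finset.nonempty_Icc.2 (by omega)) hcon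
        rw [crown_sum hn δ, Finset.sum_const, Nat.card_Icc, nsmul_eq_mul] at hlt
        have hn0 : (n:ℝ) ≠ 0 := by positivity
        have : ((n + 1 - 1 : ℕ) : ℝ) = (n : ℝ) := by
          push_cast [Nat.add_sub_cancel]
          norm_num
        rw [this, mul_div_cancel₀ P hn0] at hlt
        exact lt_irrefl P hlt
      obtain ⟨k, hk1, hk2⟩ := hex
      exact ⟨k, hk1, hδ, hk2⟩
    · rintro ⟨k, _, h, _⟩
      exact h
  rw [hcover]
  apply integrableOn_finset_iUnion.2
  intro k hk
  apply Integrable.mono' ((gdom_integrable hn hP hk).integrableOn)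
  · exact hfmeas.aestronglyMeasurable.restrict
  · rw [ae_restrict_iff' (hSmeas.inter (hAmeas k))]
    apply ae_of_all
    rintro δ ⟨hδS, hδA⟩
    exact gdom_bound hn hP hk hδS.1 hδS.2 hδA
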